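/- Let (A_ℓ)_{ℓ≥0} be a sequence of p×p Hermitian matrices and ([a_ℓ, b_ℓ])_{ℓ≥0} a sequence of intervals such that: (i) no eigenvalue of A_ℓ lies in [a_ℓ, b_ℓ] for each ℓ; (ii) max_{k≤p} |λ_k(A_{ℓ+1}) − λ_k(A_ℓ)| < (b−a)/2 for each ℓ, where b − a ≤ b_ℓ − a_ℓ for all ℓ; (iii) a_{ℓ+1} ∈ (a_ℓ − (b_ℓ−a_ℓ)/2, (a_ℓ+b_ℓ)/2) and b_{ℓ+1} ∈ ((a_ℓ+b_ℓ)/2, b_ℓ + (b_ℓ−a_ℓ)/2). Then for every k ≤ p and every ℓ, the eigenvalue λ_k(A_ℓ) lies above b_ℓ if and only if λ_k(A_{ℓ+1}) lies above b_{ℓ+1}, and λ_k(A_ℓ) lies below a_ℓ if and only if λ_k(A_{ℓ+1}) lies below a_{ℓ+1}. In particular, the number of eigenvalues of A_ℓ above b_ℓ (resp. below a_ℓ) is constant in ℓ. -/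
import Mathlib


open Matrix

/-- `μ : Fin p → ℝ` lists the eigenvalues of the Hermitian matrix `A` in decreasing order. -/
def IsDecrEigenvalues {p : ℕ} {A : Matrix (Fin p) (Fin p) ℂ} (hA : A.IsHermitian)
    (μ : Fin p → ℝ) : Prop :=
  Antitone μ ∧ ∃ σ : Equiv.Perm (Fin p), ∀ k, μ k = hA.eigenvalues (σ k)

/-- Eigenvalues cannot jump across a persistent spectral gap: if each `A_ℓ` has no
eigenvalue in `[a_ℓ, b_ℓ]`, consecutive sorted eigenvalues differ by less than `(b−a)/2`
with `b − a ≤ b_ℓ − a_ℓ`, and consecutive intervals overlap suitably, then for every `k`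
and `ℓ` the `k`-th eigenvalue of `A_ℓ` is above `b_ℓ` iff that of `A_{ℓ+1}` is above
`b_{ℓ+1}` (similarly below `a_ℓ`), so the eigenvalue counts on each side are constant. -/
theorem no_eigenvalue_jump_across_gap {p : ℕ}
    (A : ℕ → Matrix (Fin p) (Fin p) ℂ) (hA : ∀ ℓ, (A ℓ).IsHermitian)
    (μ : ℕ → Fin p → ℝ) (hμ : ∀ ℓ, IsDecrEigenvalues (hA ℓ) (μ ℓ))
    (a b : ℝ) (aι bι : ℕ → ℝ)
    (hgap : ∀ ℓ, ∀ k, μ ℓ k ∉ Set.Icc (aι ℓ) (bι ℓ))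
    (hclose : ∀ ℓ, ∀ k, |μ (ℓ + 1) k - μ ℓ k| < (b - a) / 2)
    (hlen : ∀ ℓ, b - a ≤ bι ℓ - aι ℓ)
    (ha : ∀ ℓ, aι (ℓ + 1) ∈ Set.Ioo (aι ℓ - (bι ℓ - aι ℓ) / 2) ((aι ℓ + bι ℓ) / 2))
    (hb : ∀ ℓ, bι (ℓ + 1) ∈ Set.Ioo ((aι ℓ + bι ℓ) / 2) (bι ℓ + (bι ℓ - aι ℓ) / 2)) :
    (∀ ℓ, ∀ k, (bι ℓ < μ ℓ k ↔ bι (ℓ + 1) < μ (ℓ + 1) k)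
        ∧ (μ ℓ k < aι ℓ ↔ μ (ℓ + 1) k < aι (ℓ + 1))) ∧
    (∀ ℓ, (Finset.univ.filter fun k => bι ℓ < μ ℓ k).card
          = (Finset.univ.filter fun k => bι (ℓ + 1) < μ (ℓ + 1) k).card
        ∧ (Finset.univ.filter fun k => μ ℓ k < aι ℓ).card
          = (Finset.univ.filter fun k => μ (ℓ + 1) k < aι (ℓ + 1)).card) := by
  have key : ∀ ℓ, ∀ k, (bι ℓ < μ ℓ k ↔ bι (ℓ + 1) < μ (ℓ + 1) k)
      ∧ (μ ℓ k < aι ℓ ↔ μ (ℓ + 1) k < aι (ℓ + 1)) := by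
    intro ℓ k
    have h1 := hgap ℓ k
    have h2 := hgap (ℓ + 1) k
    have h3 := hclose ℓ k
    have h4 := hlen ℓ
    have h5 := ha ℓ
    have h6 := hb ℓ
    simp only [Set.mem_Icc, Set.mem_Ioo, not_and_or, not_le, abs_lt] at h1 h2 h3 h5 h6
    rcases h1 with h1 | h1 <;> rcases h2 with h2 | h2 <;>
      constructor <;> constructor <;> intro h <;>
      first | linarith [h3.1, h3.2, h5.1, h5.2, h6.1, h6.2] | exact h1 | exact h2
  refine ⟨key, fun ℓ => ⟨?_, ?_⟩⟩ <;> apply Finset.card_bij (fun k _ => k) <;>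
    simp only [Finset.mem_filter, Finset.mem_univ, true_and]
  · exact fun k hk => (key ℓ k).1.mp hk
  · exact fun k k' hk hk' h => h
  · exact fun k hk => ⟨k, (key ℓ k).1.mpr hk, rfl⟩
  · exact fun k hk => (key ℓ k).2.mp hk
  · exact fun k k' hk hk' h => h
  · exact fun k hk => ⟨k, (key ℓ k).2.mpr hk, rfl⟩
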